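/- Explicit solution of the one-dimensional problem: Let c > 0 and define ψ_c : ℝ → ℝ by ψ_c(x) = 0 for x ≤ −1/(4c), ψ_c(x) = c·(x + 1/(4c))² for −1/(4c) < x < 1/(4c), and ψ_c(x) = x for x ≥ 1/(4c). Then ψ_c is continuously differentiable on ℝ and is a viscosity solution of min{−(1/2)u'' + c, u − max{x, 0}} = 0 on ℝ (the case d = 1 of the obstacle problem with obstacle g(x) = max{x, 0}). -/

import Mathlib

open Filter Set

noncomputable def psi (c : ℝ) (x : ℝ) : ℝ :=
  if x ≤ -(1 / (4 * c)) then 0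
  else if x < 1 / (4 * c) then c * (x + 1 / (4 * c)) ^ 2
  else x


-- second derivative test (necessary condition)
lemma second_deriv_test {f : ℝ → ℝ} {x₀ : ℝ} (hf : ContDiff ℝ 2 f)
    (h : IsLocalMax f x₀) : deriv (deriv f) x₀ ≤ 0 := by
  by_contra hlt
  push_neg at hlt
  have hf' : ContDiff ℝ 1 (deriv f) := by
    have h2 : ContDiff ℝ (1 + 1) f := by norm_num; exact hf
    exact (contDiff_succ_iff_deriv.mp h2).2.2
  have hg0 : deriv f x₀ = 0 := h.deriv_eq_zero
  have hgd : HasDerivAt (deriv f) (deriv (deriv f) x₀) x₀ :=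
    ((hf'.differentiable (by norm_num)) x₀).hasDerivAt
  have hslope := hasDerivAt_iff_tendsto_slope.mp hgd
  have hpos : ∀ᶠ x in nhdsWithin x₀ (Ioi x₀), 0 < deriv f x := by
    have h1 : ∀ᶠ x in nhdsWithin x₀ {x₀}ᶜ, 0 < slope (deriv f) x₀ x :=
      hslope.eventually (eventually_gt_nhds hlt)
    have h2 : ∀ᶠ x in nhdsWithin x₀ (Ioi x₀), 0 < slope (deriv f) x₀ x :=
      h1.filter_mono (nhdsWithin_mono _ (fun x hx => ne_of_gt hx))
    filter_upwards [h2, self_mem_nhdsWithin] with x hx hx'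
    have hxx : 0 < x - x₀ := sub_pos.mpr hx'
    have : 0 < (deriv f x - deriv f x₀) / (x - x₀) := by
      rw [slope_def_field] at hx
      simpa [div_eq_inv_mul] using hx
    have h3 := mul_pos this hxx
    rw [div_mul_cancel₀ _ (ne_of_gt hxx)] at h3
    linarith
  have hmax : ∀ᶠ x in nhdsWithin x₀ (Ioi x₀), f x ≤ f x₀ :=
    h.filter_mono nhdsWithin_le_nhds
  obtain ⟨u, hu, hsub⟩ := mem_nhdsGT_iff_exists_Ioo_subset.mp (hpos.and hmax)
  obtain ⟨b, hb⟩ := exists_between (show x₀ < u from hu)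
  have hmono : StrictMonoOn f (Icc x₀ b) := by
    apply strictMonoOn_of_deriv_pos (convex_Icc _ _) (hf.continuous.continuousOn)
    intro x hx
    rw [interior_Icc] at hx
    exact (hsub ⟨hx.1, lt_trans hx.2 hb.2⟩).1
  have hfb : f x₀ < f b := hmono ⟨le_rfl, le_of_lt hb.1⟩ ⟨le_of_lt hb.1, le_rfl⟩ hb.1
  exact absurd (hsub ⟨hb.1, hb.2⟩).2 (not_le.mpr hfb)

lemma deriv_quad (b0 b1 c x₀ : ℝ) :
    (deriv fun x => b0 + b1 * (x - x₀) + c * (x - x₀) ^ 2)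
      = fun x => b1 + 2 * c * (x - x₀) := by
  funext x
  have h : HasDerivAt (fun x => b0 + b1 * (x - x₀) + c * (x - x₀) ^ 2)
      (b1 + 2 * c * (x - x₀)) x := by
    have h1 : HasDerivAt (fun x : ℝ => x - x₀) 1 x := (hasDerivAt_id x).sub_const x₀
    have h2 := ((h1.const_mul b1).const_add b0).add ((h1.pow 2).const_mul c)
    exact h2.congr_deriv (by norm_num; ring)
  exact h.deriv

lemma contDiff_quad (b0 b1 c x₀ : ℝ) :
    ContDiff ℝ 2 (fun x => b0 + b1 * (x - x₀) + c * (x - x₀) ^ 2) := by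
  apply ContDiff.add
  apply ContDiff.add contDiff_const
  · exact contDiff_const.mul (contDiff_id.sub contDiff_const)
  · exact contDiff_const.mul ((contDiff_id.sub contDiff_const).pow 2)

lemma second_deriv_sub_quad {φ : ℝ → ℝ} (b0 b1 c x₀ : ℝ) (hφ : ContDiff ℝ 2 φ) :
    deriv (deriv (fun x => φ x - (b0 + b1 * (x - x₀) + c * (x - x₀) ^ 2))) x₀
      = deriv (deriv φ) x₀ - 2 * c := by
  have hφd : Differentiable ℝ φ := hφ.differentiable (by norm_num)
  have hφ' : ContDiff ℝ 1 (deriv φ) := by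
    have h2 : ContDiff ℝ (1 + 1) φ := by norm_num; exact hφ
    exact (contDiff_succ_iff_deriv.mp h2).2.2
  have hP : ∀ x, HasDerivAt (fun x => b0 + b1 * (x - x₀) + c * (x - x₀) ^ 2)
      (b1 + 2 * c * (x - x₀)) x := by
    intro x
    have h1 : HasDerivAt (fun x : ℝ => x - x₀) 1 x := (hasDerivAt_id x).sub_const x₀
    have h2 := ((h1.const_mul b1).const_add b0).add ((h1.pow 2).const_mul c)
    exact h2.congr_deriv (by norm_num; ring)
  have hd1 : (deriv fun x => φ x - (b0 + b1 * (x - x₀) + c * (x - x₀) ^ 2))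
      = fun x => deriv φ x - (b1 + 2 * c * (x - x₀)) := by
    funext x
    exact ((hφd x).hasDerivAt.sub (hP x)).deriv
  rw [hd1]
  have hQ : HasDerivAt (fun x => b1 + 2 * c * (x - x₀)) (2 * c) x₀ := by
    have h1 : HasDerivAt (fun x : ℝ => x - x₀) 1 x₀ := (hasDerivAt_id x₀).sub_const x₀
    have h2 := (h1.const_mul (2 * c)).const_add b1
    exact h2.congr_deriv (by ring)
  have hφ'' : HasDerivAt (deriv φ) (deriv (deriv φ) x₀) x₀ :=
    ((hφ'.differentiable (by norm_num)) x₀).hasDerivAt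
  exact (hφ''.sub hQ).deriv

lemma quad_compare_le {φ : ℝ → ℝ} {x₀ b0 b1 c : ℝ} (hφ : ContDiff ℝ 2 φ)
    (heq : φ x₀ = b0)
    (hle : ∀ᶠ x in nhds x₀, φ x ≤ b0 + b1 * (x - x₀) + c * (x - x₀) ^ 2) :
    iteratedDeriv 2 φ x₀ ≤ 2 * c := by
  have hmax : IsLocalMax (fun x => φ x - (b0 + b1 * (x - x₀) + c * (x - x₀) ^ 2)) x₀ := by
    filter_upwards [hle] with x hx
    simp only [heq]
    nlinarith [hx]
  have := second_deriv_test (hφ.sub (contDiff_quad b0 b1 c x₀)) hmax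
  rw [second_deriv_sub_quad b0 b1 c x₀ hφ] at this
  rw [iteratedDeriv_succ, iteratedDeriv_one]
  linarith

lemma quad_compare_ge {φ : ℝ → ℝ} {x₀ b0 b1 c : ℝ} (hφ : ContDiff ℝ 2 φ)
    (heq : φ x₀ = b0)
    (hge : ∀ᶠ x in nhds x₀, b0 + b1 * (x - x₀) + c * (x - x₀) ^ 2 ≤ φ x) :
    2 * c ≤ iteratedDeriv 2 φ x₀ := by
  have h := quad_compare_le (φ := fun x => -φ x) (x₀ := x₀) (c := -c) (b0 := -b0) (b1 := -b1) (hφ.neg) (by simp [heq]) ?_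
  · rw [iteratedDeriv_succ, iteratedDeriv_one] at *
    have hneg : deriv (deriv (fun x => -φ x)) x₀ = -(deriv (deriv φ) x₀) := by
      have hφd : Differentiable ℝ φ := hφ.differentiable (by norm_num)
      have hφ' : ContDiff ℝ 1 (deriv φ) := by
        have h2 : ContDiff ℝ (1 + 1) φ := by norm_num; exact hφ
        exact (contDiff_succ_iff_deriv.mp h2).2.2
      have h1 : (deriv fun x => -φ x) = fun x => -(deriv φ x) := by
        funext x; exact ((hφd x).hasDerivAt.neg).deriv
      rw [h1]
      exact (((hφ'.differentiable (by norm_num)) x₀).hasDerivAt.neg).deriv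
    rw [hneg] at h
    linarith
  · filter_upwards [hge] with x hx
    nlinarith [hx]

lemma psi_eq_left {c x : ℝ} (h : x ≤ -(1 / (4 * c))) : psi c x = 0 := if_pos h

lemma psi_eq_mid {c x : ℝ} (hc : 0 < c) (h1 : -(1 / (4 * c)) ≤ x) (h2 : x < 1 / (4 * c)) :
    psi c x = c * (x + 1 / (4 * c)) ^ 2 := by
  by_cases h : x ≤ -(1 / (4 * c))
  · have hx : x = -(1 / (4 * c)) := le_antisymm h h1
    rw [psi, if_pos h, hx]; ring
  · rw [psi, if_neg h, if_pos h2]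

lemma psi_eq_mid' {c x : ℝ} (hc : 0 < c) (h1 : -(1 / (4 * c)) < x) (h2 : x ≤ 1 / (4 * c)) :
    psi c x = c * (x + 1 / (4 * c)) ^ 2 := by
  by_cases h : x < 1 / (4 * c)
  · exact psi_eq_mid hc h1.le h
  · have hx : x = 1 / (4 * c) := le_antisymm h2 (not_lt.mp h)
    rw [psi, if_neg (by linarith), if_neg h, hx]
    field_simp
    ring

lemma psi_eq_right {c x : ℝ} (hc : 0 < c) (h : 1 / (4 * c) ≤ x) : psi c x = x := by
  have ha : 0 < 1 / (4 * c) := by positivity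
  rw [psi, if_neg (by linarith), if_neg (by linarith)]

lemma quad_hasDerivAt (c A x : ℝ) :
    HasDerivAt (fun y => c * (y + A) ^ 2) (2 * c * (x + A)) x := by
  have h1 : HasDerivAt (fun y : ℝ => y + A) 1 x := (hasDerivAt_id x).add_const A
  have h2 := (h1.pow 2).const_mul c
  exact h2.congr_deriv (by norm_num; ring)

lemma psi_hasDerivAt (c : ℝ) (hc : 0 < c) (x : ℝ) :
    HasDerivAt (psi c) (min (max (2 * c * (x + 1 / (4 * c))) 0) 1) x := by
  have ha : 0 < 1 / (4 * c) := by positivity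
  have hca : c * (1 / (4 * c)) = 1 / 4 := by field_simp
  rcases lt_trichotomy x (-(1 / (4 * c))) with h | h | h
  · have hD : min (max (2 * c * (x + 1 / (4 * c))) 0) 1 = 0 := by
      rw [max_eq_right (by nlinarith), min_eq_left (by norm_num)]
    rw [hD]
    have hev : psi c =ᶠ[nhds x] fun _ => 0 :=
      Filter.eventually_of_mem (Iio_mem_nhds h) (fun y hy => psi_eq_left (le_of_lt hy))
    exact (hasDerivAt_const x (0 : ℝ)).congr_of_eventuallyEq hev
  · have hD : min (max (2 * c * (x + 1 / (4 * c))) 0) 1 = 0 := by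
      rw [h]; norm_num
    rw [hD, h]
    have hleft : HasDerivWithinAt (psi c) 0 (Iic (-(1 / (4 * c)))) (-(1 / (4 * c))) :=
      (hasDerivAt_const _ (0 : ℝ)).hasDerivWithinAt.congr
        (fun y hy => psi_eq_left hy) (psi_eq_left le_rfl)
    have hright : HasDerivWithinAt (psi c) 0 (Ici (-(1 / (4 * c)))) (-(1 / (4 * c))) := by
      have hq : HasDerivWithinAt (fun y => c * (y + 1 / (4 * c)) ^ 2) 0
          (Ici (-(1 / (4 * c)))) (-(1 / (4 * c))) := by
        have := (quad_hasDerivAt c (1 / (4 * c)) (-(1 / (4 * c)))).hasDerivWithinAt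
          (s := Ici (-(1 / (4 * c))))
        exact this.congr_deriv (by ring)
      apply hq.congr_of_eventuallyEq ?_ (by rw [psi_eq_mid hc le_rfl (by linarith)])
      filter_upwards [nhdsWithin_le_nhds (Iio_mem_nhds (show -(1 / (4 * c)) < 1 / (4 * c) by
        linarith)), self_mem_nhdsWithin] with y h1 h2
      exact psi_eq_mid hc h2 h1
    have := hleft.union hright
    rw [Iic_union_Ici] at this
    exact hasDerivWithinAt_univ.mp this
  · rcases lt_trichotomy x (1 / (4 * c)) with h' | h' | h'
    · have hD : min (max (2 * c * (x + 1 / (4 * c))) 0) 1 = 2 * c * (x + 1 / (4 * c)) := by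
        rw [max_eq_left (by nlinarith), min_eq_left (by nlinarith)]
      rw [hD]
      have hev : psi c =ᶠ[nhds x] fun y => c * (y + 1 / (4 * c)) ^ 2 :=
        Filter.eventually_of_mem (Ioo_mem_nhds h h')
          (fun y hy => psi_eq_mid hc hy.1.le hy.2)
      exact (quad_hasDerivAt c (1 / (4 * c)) x).congr_of_eventuallyEq hev
    · have hD : min (max (2 * c * (x + 1 / (4 * c))) 0) 1 = 1 := by
        rw [h']
        have : 2 * c * (1 / (4 * c) + 1 / (4 * c)) = 1 := by field_simp; ring
        rw [this]; norm_num
      rw [hD, h']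
      have hleft : HasDerivWithinAt (psi c) 1 (Iic (1 / (4 * c))) (1 / (4 * c)) := by
        have hq : HasDerivWithinAt (fun y => c * (y + 1 / (4 * c)) ^ 2) 1
            (Iic (1 / (4 * c))) (1 / (4 * c)) := by
          have := (quad_hasDerivAt c (1 / (4 * c)) (1 / (4 * c))).hasDerivWithinAt
            (s := Iic (1 / (4 * c)))
          exact this.congr_deriv (by field_simp; ring)
        apply hq.congr_of_eventuallyEq ?_ (by rw [psi_eq_mid' hc (by linarith) le_rfl])
        filter_upwards [nhdsWithin_le_nhds (Ioi_mem_nhds (show -(1 / (4 * c)) < 1 / (4 * c) by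
          linarith)), self_mem_nhdsWithin] with y h1 h2
        exact psi_eq_mid' hc h1 h2
      have hright : HasDerivWithinAt (psi c) 1 (Ici (1 / (4 * c))) (1 / (4 * c)) :=
        (hasDerivAt_id _).hasDerivWithinAt.congr
          (fun y hy => psi_eq_right hc hy) (psi_eq_right hc le_rfl)
      have := hleft.union hright
      rw [Iic_union_Ici] at this
      exact hasDerivWithinAt_univ.mp this
    · have hD : min (max (2 * c * (x + 1 / (4 * c))) 0) 1 = 1 := by
        rw [max_eq_left (by nlinarith), min_eq_right (by nlinarith)]
      rw [hD]
      have hev : psi c =ᶠ[nhds x] id :=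
        Filter.eventually_of_mem (Ioi_mem_nhds h') (fun y hy => psi_eq_right hc (le_of_lt hy))
      exact (hasDerivAt_id x).congr_of_eventuallyEq hev

lemma psi_contDiff (c : ℝ) (hc : 0 < c) : ContDiff ℝ 1 (psi c) := by
  rw [contDiff_one_iff_deriv]
  refine ⟨fun x => (psi_hasDerivAt c hc x).differentiableAt, ?_⟩
  have hd : deriv (psi c) = fun x => min (max (2 * c * (x + 1 / (4 * c))) 0) 1 :=
    funext fun x => (psi_hasDerivAt c hc x).deriv
  rw [hd]
  exact ((continuous_const.mul (continuous_id.add continuous_const)).max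
    continuous_const).min continuous_const

lemma psi_ge (c : ℝ) (hc : 0 < c) (x : ℝ) : max x 0 ≤ psi c x := by
  have ha : 0 < 1 / (4 * c) := by positivity
  have hca : c * (1 / (4 * c)) = 1 / 4 := by field_simp
  rcases le_or_gt x (-(1 / (4 * c))) with h | h
  · rw [psi_eq_left h, max_le_iff]
    constructor <;> linarith
  rcases lt_or_ge x (1 / (4 * c)) with h' | h'
  · rw [psi_eq_mid hc h.le h', max_le_iff]
    constructor
    · nlinarith [sq_nonneg (x - 1 / (4 * c)), mul_nonneg hc.le (sq_nonneg (x - 1 / (4 * c)))]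
    · positivity
  · rw [psi_eq_right hc h', max_le_iff]
    constructor <;> linarith

lemma psi_upper (c : ℝ) (hc : 0 < c) (x₀ : ℝ) :
    ∃ b1, ∀ x, psi c x ≤ psi c x₀ + b1 * (x - x₀) + c * (x - x₀) ^ 2 := by
  have ha : 0 < 1 / (4 * c) := by positivity
  have hca : c * (1 / (4 * c)) = 1 / 4 := by field_simp
  rcases le_or_gt x₀ (-(1 / (4 * c))) with h | h
  · refine ⟨0, fun x => ?_⟩
    rw [psi_eq_left h]
    rcases le_or_gt x (-(1 / (4 * c))) with h1 | h1
    · rw [psi_eq_left h1]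
      nlinarith [mul_nonneg hc.le (sq_nonneg (x - x₀))]
    rcases lt_or_ge x (1 / (4 * c)) with h2 | h2
    · rw [psi_eq_mid hc h1.le h2]
      nlinarith [mul_nonneg (mul_nonneg hc.le (show (0:ℝ) ≤ -(1 / (4 * c)) - x₀ by linarith))
        (show (0:ℝ) ≤ (x + 1 / (4 * c)) + (x - x₀) by linarith)]
    · rw [psi_eq_right hc h2]
      nlinarith [mul_nonneg hc.le (sq_nonneg (x - 1 / (4 * c))),
        mul_nonneg (mul_nonneg hc.le (show (0:ℝ) ≤ -(1 / (4 * c)) - x₀ by linarith))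
        (show (0:ℝ) ≤ (x + 1 / (4 * c)) + (x - x₀) by linarith)]
  rcases lt_or_ge x₀ (1 / (4 * c)) with h' | h'
  · refine ⟨2 * c * (x₀ + 1 / (4 * c)), fun x => ?_⟩
    have hr : psi c x₀ + 2 * c * (x₀ + 1 / (4 * c)) * (x - x₀) + c * (x - x₀) ^ 2
        = c * (x + 1 / (4 * c)) ^ 2 := by
      rw [psi_eq_mid hc h.le h']
      ring
    rw [hr]
    rcases le_or_gt x (-(1 / (4 * c))) with h1 | h1
    · rw [psi_eq_left h1]
      positivity
    rcases lt_or_ge x (1 / (4 * c)) with h2 | h2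
    · rw [psi_eq_mid hc h1.le h2]
    · rw [psi_eq_right hc h2]
      nlinarith [mul_nonneg hc.le (sq_nonneg (x - 1 / (4 * c)))]
  · refine ⟨1, fun x => ?_⟩
    rw [psi_eq_right hc h']
    rcases le_or_gt x (-(1 / (4 * c))) with h1 | h1
    · rw [psi_eq_left h1]
      nlinarith [mul_nonneg hc.le (sq_nonneg (x + 1 / (4 * c))),
        mul_nonneg (mul_nonneg hc.le (show (0:ℝ) ≤ x₀ - 1 / (4 * c) by linarith))
        (show (0:ℝ) ≤ (x₀ - x) + (1 / (4 * c) - x) by linarith)]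
    rcases lt_or_ge x (1 / (4 * c)) with h2 | h2
    · rw [psi_eq_mid hc h1.le h2]
      nlinarith [mul_nonneg hc.le (sq_nonneg (x - 1 / (4 * c))),
        mul_nonneg (mul_nonneg hc.le (show (0:ℝ) ≤ x₀ - 1 / (4 * c) by linarith))
        (show (0:ℝ) ≤ (x₀ - x) + (1 / (4 * c) - x) by linarith)]
    · rw [psi_eq_right hc h2]
      nlinarith [mul_nonneg hc.le (sq_nonneg (x - x₀))]

lemma psi_contact {c x₀ : ℝ} (hc : 0 < c) (h : max x₀ 0 < psi c x₀) :
    -(1 / (4 * c)) < x₀ ∧ x₀ < 1 / (4 * c) := by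
  have ha : 0 < 1 / (4 * c) := by positivity
  constructor
  · by_contra hx
    push_neg at hx
    rw [psi_eq_left hx] at h
    have : max x₀ 0 ≥ 0 := le_max_right _ _
    linarith
  · by_contra hx
    push_neg at hx
    rw [psi_eq_right hc hx] at h
    have : max x₀ 0 ≥ x₀ := le_max_left _ _
    linarith

def IsVSubsol1 (c : ℝ) (ψ u : ℝ → ℝ) : Prop :=
  ∀ x₀ : ℝ, ψ x₀ < u x₀ →
    ∀ φ : ℝ → ℝ, ContDiff ℝ 2 φ → φ x₀ = u x₀ →
      (∀ᶠ x in nhds x₀, u x ≤ φ x) → -(1 / 2 : ℝ) * iteratedDeriv 2 φ x₀ + c ≤ 0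

def IsVSupersol1 (c : ℝ) (ψ u : ℝ → ℝ) : Prop :=
  (∀ x, ψ x ≤ u x) ∧
  ∀ x₀ : ℝ, ∀ φ : ℝ → ℝ, ContDiff ℝ 2 φ → φ x₀ = u x₀ →
    (∀ᶠ x in nhds x₀, φ x ≤ u x) → 0 ≤ -(1 / 2 : ℝ) * iteratedDeriv 2 φ x₀ + c

def IsVSol1 (c : ℝ) (ψ u : ℝ → ℝ) : Prop :=
  IsVSubsol1 c ψ u ∧ IsVSupersol1 c ψ u

/-- Explicit solution of the one-dimensional problem. -/
theorem psi_is_solution (c : ℝ) (hc : 0 < c) :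
    ContDiff ℝ 1 (psi c) ∧ IsVSol1 c (fun x => max x 0) (psi c) := by
  refine ⟨psi_contDiff c hc, ?_, ?_⟩
  · intro x₀ hlt φ hφ heq hev
    obtain ⟨h1, h2⟩ := psi_contact hc hlt
    have hb : 2 * c ≤ iteratedDeriv 2 φ x₀ := by
      apply quad_compare_ge (b0 := psi c x₀) (b1 := 2 * c * (x₀ + 1 / (4 * c))) hφ heq
      filter_upwards [hev, Ioo_mem_nhds h1 h2] with x hx hxm
      have hr : psi c x₀ + 2 * c * (x₀ + 1 / (4 * c)) * (x - x₀) + c * (x - x₀) ^ 2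
          = psi c x := by
        rw [psi_eq_mid hc (le_of_lt h1) h2, psi_eq_mid hc hxm.1.le hxm.2]
        ring
      rw [hr]
      exact hx
    linarith
  · refine ⟨psi_ge c hc, ?_⟩
    intro x₀ φ hφ heq hev
    obtain ⟨b1, hb1⟩ := psi_upper c hc x₀
    have hb : iteratedDeriv 2 φ x₀ ≤ 2 * c := by
      apply quad_compare_le hφ heq
      filter_upwards [hev] with x hx
      exact le_trans hx (hb1 x)
    linarith
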